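/- (q,ω-integration by parts) Let f,g : I → ℝ be q,ω-differentiable on I and let a,b ∈ I. If the function t ↦ D_{q,ω}[f](t)·g(qt+ω) is q,ω-integrable on [a,b], then so is t ↦ f(t)·D_{q,ω}[g](t), and ∫_a^b f(t)·D_{q,ω}[g](t) d_{q,ω}t = f(b)g(b) − f(a)g(a) − ∫_a^b D_{q,ω}[f](t)·g(qt+ω) d_{q,ω}t. -/

import Mathlib

noncomputable section

namespace Hahn

/-- The fixed point `ω₀ = ω/(1-q)` of `t ↦ qt+ω`. -/
def omega0 (q ω : ℝ) : ℝ := ω / (1 - q)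

/-- The Hahn difference operator of `f` (viewed as a function on the interval `I`):
for `t ≠ ω₀` it is `(f(qt+ω) - f(t))/((q-1)t+ω)`, and at `ω₀` it is the derivative of `f`
at `ω₀` (within `I`). -/
def hahnD (q ω : ℝ) (I : Set ℝ) (f : ℝ → ℝ) (t : ℝ) : ℝ :=
  if t = omega0 q ω then derivWithin f I t
  else (f (q * t + ω) - f t) / ((q - 1) * t + ω)

/-- `f` is `q,ω`-differentiable on `I`: the only nontrivial requirement is
differentiability at `ω₀` (for `t ≠ ω₀` the Hahn quotient always exists). -/
def HahnDiffOn (q ω : ℝ) (I : Set ℝ) (f : ℝ → ℝ) : Prop :=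
  DifferentiableWithinAt ℝ f I (omega0 q ω)

/-- The `q`-bracket `[k]_q = (1-q^k)/(1-q)`. -/
def qnum (q : ℝ) (k : ℕ) : ℝ := (1 - q ^ k) / (1 - q)

/-- The `k`-th term of the Jackson–Nörlund series of `f` at `x`. -/
def jnTerm (q ω : ℝ) (f : ℝ → ℝ) (x : ℝ) (k : ℕ) : ℝ :=
  q ^ k * f (q ^ k * x + ω * qnum q k)

/-- The Jackson–Nörlund series of `f` converges at `x`. -/
def JNSummable (q ω : ℝ) (f : ℝ → ℝ) (x : ℝ) : Prop :=
  Summable (jnTerm q ω f x)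

/-- The Jackson–Nörlund integral `∫_{ω₀}^x f(t) d_{q,ω}t`. -/
def jnInt0 (q ω : ℝ) (f : ℝ → ℝ) (x : ℝ) : ℝ :=
  (x * (1 - q) - ω) * ∑' k : ℕ, jnTerm q ω f x k

/-- The Jackson–Nörlund integral `∫_a^b f(t) d_{q,ω}t`. -/
def jnInt (q ω : ℝ) (f : ℝ → ℝ) (a b : ℝ) : ℝ :=
  jnInt0 q ω f b - jnInt0 q ω f a

/-- `f` is `q,ω`-integrable on `[a,b]`. -/
def JNIntegrable (q ω : ℝ) (f : ℝ → ℝ) (a b : ℝ) : Prop :=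
  JNSummable q ω f a ∧ JNSummable q ω f b

/-- The set `[s]_{q,ω} = {q^n s + ω[n]_q : n ∈ ℕ} ∪ {ω₀}`. -/
def qwOrbit (q ω s : ℝ) : Set ℝ :=
  {x | ∃ n : ℕ, x = q ^ n * s + ω * qnum q n} ∪ {omega0 q ω}

/-- The `q,ω`-interval `[a,b]_{q,ω}`. -/
def qwInterval (q ω a b : ℝ) : Set ℝ :=
  qwOrbit q ω a ∪ qwOrbit q ω b

open Filter Asymptotics Topology

variable {q ω : ℝ}

lemma pt_eq (hq1 : q < 1) (x : ℝ) (k : ℕ) :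
    q ^ k * x + ω * qnum q k = omega0 q ω + q ^ k * (x - omega0 q ω) := by
  have h : (1:ℝ) - q ≠ 0 := sub_ne_zero.mpr hq1.ne'
  simp only [qnum, omega0]
  field_simp
  ring

lemma pt_mem (hq : 0 < q) (hq1 : q < 1) {I : Set ℝ} (hI : I.OrdConnected)
    (hmem : omega0 q ω ∈ I) {x : ℝ} (hx : x ∈ I) (k : ℕ) :
    omega0 q ω + q ^ k * (x - omega0 q ω) ∈ I := by
  apply hI.uIcc_subset hmem hx
  have h0 : (0:ℝ) < q ^ k := pow_pos hq k
  have h1 : q ^ k ≤ 1 := pow_le_one₀ hq.le hq1.le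
  rcases le_total (omega0 q ω) x with h | h
  · exact Set.mem_uIcc.2 (Or.inl ⟨by nlinarith, by nlinarith⟩)
  · exact Set.mem_uIcc.2 (Or.inr ⟨by nlinarith, by nlinarith⟩)

lemma telescope (hq : 0 < q) (hq1 : q < 1) {I : Set ℝ} (hI : I.OrdConnected)
    (hmem : omega0 q ω ∈ I) {h : ℝ → ℝ}
    (hh : DifferentiableWithinAt ℝ h I (omega0 q ω)) {x : ℝ} (hx : x ∈ I) :
    Summable (fun k : ℕ => h (omega0 q ω + q ^ (k+1) * (x - omega0 q ω))
      - h (omega0 q ω + q ^ k * (x - omega0 q ω))) ∧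
    (∑' k : ℕ, (h (omega0 q ω + q ^ (k+1) * (x - omega0 q ω))
      - h (omega0 q ω + q ^ k * (x - omega0 q ω)))) = h (omega0 q ω) - h x := by
  set w := omega0 q ω with hw
  set u : ℕ → ℝ := fun k => w + q ^ k * (x - w) with hu
  -- u tends to w within I
  have hq0 : Tendsto (fun k : ℕ => q ^ k) atTop (nhds 0) :=
    tendsto_pow_atTop_nhds_zero_of_lt_one hq.le hq1
  have hut : Filter.Tendsto u atTop (nhds w) := by
    have := (hq0.mul_const (x - w)).const_add w
    simpa using this
  have humem : ∀ k, u k ∈ I := fun k => pt_mem hq hq1 hI hmem hx k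
  have hutI : Filter.Tendsto u atTop (nhdsWithin w I) :=
    tendsto_nhdsWithin_of_tendsto_nhds_of_eventually_within u hut
      (Filter.Eventually.of_forall humem)
  set d := derivWithin h I w with hd
  have hder : HasDerivWithinAt h d I w := hh.hasDerivWithinAt
  have hlo : (fun x' => h x' - h w - (x' - w) • d) =o[nhdsWithin w I] fun x' => x' - w :=
    hasDerivWithinAt_iff_isLittleO.1 hder
  have hlo2 : (fun k => h (u k) - h w - (u k - w) • d) =o[atTop] fun k => u k - w :=
    hlo.comp_tendsto hutI
  have huw : ∀ k, u k - w = q ^ k * (x - w) := fun k => by simp [hu]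
  have hbig : (fun k => u k - w) =O[atTop] fun k : ℕ => q ^ k := by
    have h1 : (fun k : ℕ => q ^ k * (x - w)) =O[atTop] fun k : ℕ => q ^ k := by
      simpa [mul_comm] using
        (Asymptotics.isBigO_refl (fun k : ℕ => (q:ℝ) ^ k) atTop).const_mul_left (x - w)
    have h2 : (fun k : ℕ => u k - w) = fun k : ℕ => q ^ k * (x - w) := funext huw
    rw [h2]; exact h1
  set v : ℕ → ℝ := fun k => h (u k) - h w - (u k - w) * d with hv
  have hvs : Summable v :=
    summable_of_isBigO_nat (summable_geometric_of_lt_one hq.le hq1)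
      ((hlo2.isBigO.trans hbig))
  have hgs : Summable (fun k : ℕ => ((q - 1) * (x - w) * d) * q ^ k) :=
    (summable_geometric_of_lt_one hq.le hq1).mul_left _
  have hsum : Summable (fun k : ℕ => h (u (k+1)) - h (u k)) := by
    have : (fun k : ℕ => h (u (k+1)) - h (u k)) =
        fun k => (v (k+1) - v k) + ((q - 1) * (x - w) * d) * q ^ k := by
      funext k
      simp only [hv, huw]
      ring
    rw [this]
    exact (((summable_nat_add_iff 1).2 hvs).sub hvs).add hgs
  refine ⟨hsum, ?_⟩
  have hpartial : ∀ n, (∑ k ∈ Finset.range n, (h (u (k+1)) - h (u k))) = h (u n) - h (u 0) :=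
    fun n => Finset.sum_range_sub (fun k => h (u k)) n
  have ht1 : Filter.Tendsto (fun n => ∑ k ∈ Finset.range n, (h (u (k+1)) - h (u k))) atTop
      (nhds (∑' k, (h (u (k+1)) - h (u k)))) := hsum.hasSum.tendsto_sum_nat
  have ht2 : Filter.Tendsto (fun n => h (u n) - h (u 0)) atTop (nhds (h w - h (u 0))) :=
    ((hh.continuousWithinAt.tendsto).comp hutI).sub_const _
  have := tendsto_nhds_unique (by simpa only [hpartial] using ht1) ht2
  have hu0 : u 0 = x := by simp [hu]
  rw [this, hu0]


lemma jnInt0_eq (hq : 0 < q) (hq1 : q < 1) {I : Set ℝ} (hI : I.OrdConnected)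
    (hmem : omega0 q ω ∈ I) {f g : ℝ → ℝ} (hf : HahnDiffOn q ω I f)
    (hg : HahnDiffOn q ω I g) {x : ℝ} (hx : x ∈ I)
    (hs : JNSummable q ω (fun t => hahnD q ω I f t * g (q * t + ω)) x) :
    JNSummable q ω (fun t => f t * hahnD q ω I g t) x ∧
      jnInt0 q ω (fun t => f t * hahnD q ω I g t) x =
        f x * g x - f (omega0 q ω) * g (omega0 q ω) -
          jnInt0 q ω (fun t => hahnD q ω I f t * g (q * t + ω)) x := by
  have h1q : (1:ℝ) - q ≠ 0 := sub_ne_zero.mpr hq1.ne'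
  set w := omega0 q ω with hw
  by_cases hxw : x = w
  · -- x = ω₀ : everything degenerates
    constructor
    · have hpt : ∀ k : ℕ, q ^ k * x + ω * qnum q k = x := by
        intro k; rw [pt_eq hq1, hxw]; simp [hw]
      have heq : jnTerm q ω (fun t => f t * hahnD q ω I g t) x
          = fun k => (f x * hahnD q ω I g x) * q ^ k := by
        funext k
        simp only [jnTerm, hpt k]
        ring
      unfold JNSummable
      rw [heq]
      exact (summable_geometric_of_lt_one hq.le hq1).mul_left _
    · have hfac : x * (1 - q) - ω = 0 := by
        rw [hxw, hw]
        unfold omega0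
        field_simp
        ring
      unfold jnInt0
      rw [hfac, hxw]
      ring
  · -- x ≠ ω₀
    have hxw0 : x - w ≠ 0 := sub_ne_zero.mpr hxw
    set c : ℝ := ((q - 1) * (x - w))⁻¹ with hc
    set u : ℕ → ℝ := fun k => w + q ^ k * (x - w) with hu
    have hqw : q * w + ω = w := by
      simp only [hw, omega0]; field_simp; ring
    have huk : ∀ k : ℕ, q ^ k * x + ω * qnum q k = u k := fun k => pt_eq hq1 x k
    have hune : ∀ k : ℕ, u k ≠ w := by
      intro k
      simp only [hu]
      intro hcon
      have : q ^ k * (x - w) = 0 := by linarith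
      exact hxw0 (by
        rcases mul_eq_zero.1 this with h | h
        · exact absurd h (pow_ne_zero k hq.ne')
        · exact absurd h hxw0)
    have husucc : ∀ k : ℕ, q * u k + ω = u (k + 1) := by
      intro k
      simp only [hu]
      rw [pow_succ]
      nlinarith [hqw]
    have hmu : ∀ k : ℕ, (q - 1) * u k + ω = (q - 1) * (q ^ k * (x - w)) := by
      intro k
      have : (q - 1) * w + ω = 0 := by simp only [hw, omega0]; field_simp; ring
      simp only [hu]; nlinarith [this]
    have hmune : ∀ k : ℕ, (q - 1) * (q ^ k * (x - w)) ≠ 0 := by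
      intro k
      exact mul_ne_zero (sub_ne_zero.mpr hq1.ne) (mul_ne_zero (pow_ne_zero k hq.ne') hxw0)
    -- key termwise identity
    have hkey : ∀ k : ℕ, jnTerm q ω (fun t => f t * hahnD q ω I g t) x k =
        c * (f (u (k+1)) * g (u (k+1)) - f (u k) * g (u k))
          - jnTerm q ω (fun t => hahnD q ω I f t * g (q * t + ω)) x k := by
      intro k
      unfold jnTerm hahnD
      rw [huk k]
      simp only [← hw]
      rw [if_neg (hune k), if_neg (hune k), husucc k, hmu k]
      have hq1' : q - 1 ≠ 0 := sub_ne_zero.mpr hq1.ne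
      have hqk : (q:ℝ) ^ k ≠ 0 := pow_ne_zero k hq.ne'
      rw [hc]
      field_simp
      ring
    -- summability of the telescope
    obtain ⟨hTsum, hTval⟩ := telescope hq hq1 hI hmem (hf.mul hg) hx
    have hTsum' : Summable (fun k : ℕ =>
        c * (f (u (k+1)) * g (u (k+1)) - f (u k) * g (u k))) := by
      simpa [hu] using hTsum.mul_left c
    have hSsum : Summable (jnTerm q ω (fun t => f t * hahnD q ω I g t) x) := by
      have := hTsum'.sub hs
      simpa only [← hkey] using this
    refine ⟨hSsum, ?_⟩
    -- sum value
    have htsum_eq : (∑' k, jnTerm q ω (fun t => f t * hahnD q ω I g t) x k) =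
        c * ((f w * g w) - (f x * g x))
          - ∑' k, jnTerm q ω (fun t => hahnD q ω I f t * g (q * t + ω)) x k := by
      have h1 : (∑' k, jnTerm q ω (fun t => f t * hahnD q ω I g t) x k) =
          (∑' k, (c * (f (u (k+1)) * g (u (k+1)) - f (u k) * g (u k))
            - jnTerm q ω (fun t => hahnD q ω I f t * g (q * t + ω)) x k)) := by
        congr 1; funext k; exact hkey k
      have h2 : (∑' k : ℕ, c * (f (u (k+1)) * g (u (k+1)) - f (u k) * g (u k)))
          = c * (f w * g w - f x * g x) := by
        rw [tsum_mul_left]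
        exact congrArg (c * ·) (by simpa [hu] using hTval)
      rw [h1, hTsum'.tsum_sub hs, h2]
    unfold jnInt0
    rw [htsum_eq]
    have hfac : (x * (1 - q) - ω) * c = -1 := by
      have : x * (1 - q) - ω = (1 - q) * (x - w) := by
        simp only [hw, omega0]
        field_simp
        try ring
      rw [this, hc]
      rw [mul_inv_eq_iff_eq_mul₀ (mul_ne_zero (sub_ne_zero.mpr hq1.ne) hxw0)]
      ring
    have : (x * (1 - q) - ω) * (c * (f w * g w - f x * g x)
        - ∑' k, jnTerm q ω (fun t => hahnD q ω I f t * g (q * t + ω)) x k)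
        = ((x * (1 - q) - ω) * c) * (f w * g w - f x * g x)
          - (x * (1 - q) - ω) * ∑' k,
              jnTerm q ω (fun t => hahnD q ω I f t * g (q * t + ω)) x k := by ring
    rw [this, hfac]
    ring


/-- `q,ω`-integration by parts. -/
theorem integration_by_parts
    (q ω : ℝ) (hq : 0 < q) (hq1 : q < 1) (hω : 0 ≤ ω)
    (I : Set ℝ) (hI : I.OrdConnected) (hmem : omega0 q ω ∈ I)
    (f g : ℝ → ℝ) (hf : HahnDiffOn q ω I f) (hg : HahnDiffOn q ω I g)
    (a b : ℝ) (ha : a ∈ I) (hb : b ∈ I)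
    (hint : JNIntegrable q ω (fun t => hahnD q ω I f t * g (q * t + ω)) a b) :
    JNIntegrable q ω (fun t => f t * hahnD q ω I g t) a b ∧
      jnInt q ω (fun t => f t * hahnD q ω I g t) a b =
        f b * g b - f a * g a -
          jnInt q ω (fun t => hahnD q ω I f t * g (q * t + ω)) a b := by
  obtain ⟨hsa, hsb⟩ := hint
  obtain ⟨sa, ea⟩ := jnInt0_eq hq hq1 hI hmem hf hg ha hsa
  obtain ⟨sb, eb⟩ := jnInt0_eq hq hq1 hI hmem hf hg hb hsb
  refine ⟨⟨sa, sb⟩, ?_⟩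
  unfold jnInt
  rw [ea, eb]
  ring

end Hahn
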